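/- In the free group F_n with word length Gromov form, for each nonidentity reduced word w let w⁻ be w with its last letter's exponent decreased by one in absolute value, and set u_w = δ_w − δ_{w⁻} ∈ ℝ[F_n]. Then ⟨u_w, u_w⟩ = 1 for all w ≠ e, and ⟨u_{w₁}, u_{w₂}⟩ = 0 for distinct nonidentity words w₁ ≠ w₂. -/

import Mathlib

open FreeGroup List

variable {α : Type*} [DecidableEq α]

/-- non-cancelling adjacency -/
def RR (x y : α × Bool) : Prop := ¬(x.1 = y.1 ∧ x.2 = !y.2)

instance : DecidableRel (RR (α := α)) := fun x y => by unfold RR; infer_instance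

lemma reduce_eq_self_of_chain' {l : List (α × Bool)} (h : List.Chain' RR l) :
    FreeGroup.reduce l = l := by
  induction l with
  | nil => rfl
  | cons x t ih =>
    have ht : List.Chain' RR t := h.tail
    rw [FreeGroup.reduce.cons, ih ht]
    cases t with
    | nil => rfl
    | cons y s =>
      have hxy : RR x y := List.isChain_cons_cons.1 h |>.1
      simp only [if_neg hxy]

lemma chain'_reduce (l : List (α × Bool)) : List.Chain' RR (FreeGroup.reduce l) := by
  induction l with
  | nil => exact List.isChain_nil
  | cons x t ih =>
    rw [FreeGroup.reduce.cons]
    cases h : FreeGroup.reduce t with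
    | nil => exact List.isChain_singleton x
    | cons y s =>
      rw [h] at ih
      show List.Chain' RR (if x.1 = y.1 ∧ x.2 = !y.2 then s else x :: y :: s)
      by_cases hc : x.1 = y.1 ∧ x.2 = !y.2
      · rw [if_pos hc]; exact ih.tail
      · simp only [if_neg hc]
        exact List.isChain_cons_cons.2 ⟨hc, ih⟩

lemma chain'_toWord (w : FreeGroup α) : List.Chain' RR w.toWord := by
  rw [← FreeGroup.reduce_toWord]; exact chain'_reduce _

omit [DecidableEq α] in
lemma chain'_invRev {l : List (α × Bool)} (h : List.Chain' RR l) :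
    List.Chain' RR (FreeGroup.invRev l) := by
  unfold FreeGroup.invRev
  show List.IsChain RR _
  rw [List.isChain_reverse]
  rw [List.isChain_map]
  refine h.imp ?_
  rintro ⟨a, u⟩ ⟨b, v⟩ hab ⟨h1, h2⟩
  exact hab ⟨h1.symm, by
    cases u <;> cases v <;> simp_all⟩

lemma norm_mk_of_chain' {l : List (α × Bool)} (h : List.Chain' RR l) :
    FreeGroup.norm (FreeGroup.mk l) = l.length := by
  rw [FreeGroup.norm, FreeGroup.toWord_mk, reduce_eq_self_of_chain' h]

open FreeGroup List

variable {α : Type*} [DecidableEq α]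

/-- length of the longest common prefix -/
def cpl : List (α × Bool) → List (α × Bool) → ℕ
  | [], _ => 0
  | _, [] => 0
  | (a :: l), (b :: m) => if a = b then cpl l m + 1 else 0

@[simp] lemma cpl_nil_left (m : List (α × Bool)) : cpl [] m = 0 := by cases m <;> rfl
@[simp] lemma cpl_nil_right (l : List (α × Bool)) : cpl l [] = 0 := by cases l <;> rfl
lemma cpl_cons (a b : α × Bool) (l m : List (α × Bool)) :
    cpl (a :: l) (b :: m) = if a = b then cpl l m + 1 else 0 := rfl

lemma cpl_comm (l m : List (α × Bool)) : cpl l m = cpl m l := by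
  induction l generalizing m with
  | nil => simp
  | cons a l ih =>
    cases m with
    | nil => simp
    | cons b m => rw [cpl_cons, cpl_cons, ih]; by_cases h : a = b <;> simp [h, eq_comm]

@[simp] lemma cpl_self (l : List (α × Bool)) : cpl l l = l.length := by
  induction l with
  | nil => simp
  | cons a l ih => rw [cpl_cons, if_pos rfl, ih]; rfl

lemma cpl_le_left (l m : List (α × Bool)) : cpl l m ≤ l.length := by
  induction l generalizing m with
  | nil => simp
  | cons a l ih =>
    cases m with
    | nil => simp
    | cons b m =>
      rw [cpl_cons]
      by_cases h : a = b <;> simp [h]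
      exact ih m

lemma cpl_le_right (l m : List (α × Bool)) : cpl l m ≤ m.length := by
  rw [cpl_comm]; exact cpl_le_left m l

lemma cpl_prefix (l : List (α × Bool)) {p m : List (α × Bool)} (hp : p <+: m) :
    cpl l p = min (cpl l m) p.length := by
  induction l generalizing p m with
  | nil => simp
  | cons a l ih =>
    cases p with
    | nil => simp
    | cons b p =>
      obtain ⟨t, rfl⟩ := hp
      rw [List.cons_append, cpl_cons, cpl_cons]
      by_cases h : a = b
      · rw [if_pos h, if_pos h, ih (p.prefix_append t)]
        simp only [List.length_cons]
        omega
      · simp [h]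

lemma cpl_lt_of_ne {l m : List (α × Bool)} (h : l ≠ m) :
    cpl l m < l.length ∨ cpl l m < m.length := by
  induction l generalizing m with
  | nil =>
    right; cases m with
    | nil => exact absurd rfl h
    | cons b m => simp
  | cons a l ih =>
    cases m with
    | nil => left; simp
    | cons b m =>
      rw [cpl_cons]
      by_cases hab : a = b
      · subst hab
        have := ih (m := m) (by intro hh; exact h (by rw [hh]))
        rw [if_pos rfl]
        simp only [List.length_cons]
        omega
      · rw [if_neg hab]; left; simp

lemma norm_inv_mul_add (l1 l2 : List (α × Bool)) (h1 : List.Chain' RR l1)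
    (h2 : List.Chain' RR l2) :
    FreeGroup.norm ((FreeGroup.mk l1)⁻¹ * FreeGroup.mk l2) + 2 * cpl l1 l2
      = l1.length + l2.length := by
  induction l1 generalizing l2 with
  | nil =>
    have : FreeGroup.mk ([] : List (α × Bool)) = 1 := FreeGroup.one_eq_mk.symm
    rw [this]
    simp [norm_mk_of_chain' h2]
  | cons a l1' ih =>
    cases l2 with
    | nil =>
      have : FreeGroup.mk ([] : List (α × Bool)) = 1 := FreeGroup.one_eq_mk.symm
      rw [this, mul_one, FreeGroup.norm_inv_eq, norm_mk_of_chain' h1]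
      simp
    | cons b l2' =>
      by_cases hab : a = b
      · subst hab
        have key : (FreeGroup.mk (a :: l1'))⁻¹ * FreeGroup.mk (a :: l2')
            = (FreeGroup.mk l1')⁻¹ * FreeGroup.mk l2' := by
          have e1 : FreeGroup.mk (a :: l1') = FreeGroup.mk [a] * FreeGroup.mk l1' := by
            rw [FreeGroup.mul_mk]; rfl
          have e2 : FreeGroup.mk (a :: l2') = FreeGroup.mk [a] * FreeGroup.mk l2' := by
            rw [FreeGroup.mul_mk]; rfl
          rw [e1, e2, mul_inv_rev, mul_assoc, inv_mul_cancel_left]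
        rw [key, cpl_cons, if_pos rfl]
        have := ih l2' h1.tail h2.tail
        simp only [List.length_cons]
        omega
      · have hj : List.Chain' RR (FreeGroup.invRev (a :: l1') ++ (b :: l2')) := by
          show List.IsChain RR _
          rw [List.isChain_append]
          refine ⟨chain'_invRev h1, h2, ?_⟩
          intro x hx y hy
          have hxval : x = (a.1, !a.2) := by
            unfold FreeGroup.invRev at hx
            rw [List.getLast?_reverse] at hx
            simp at hx
            exact hx.symm
          have hyval : y = b := by simp at hy; exact hy.symm
          subst hxval hyval
          rintro ⟨u1, u2⟩
          apply hab
          exact Prod.ext u1 (Bool.not_inj u2)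
        have key : (FreeGroup.mk (a :: l1'))⁻¹ * FreeGroup.mk (b :: l2')
            = FreeGroup.mk (FreeGroup.invRev (a :: l1') ++ (b :: l2')) := by
          rw [FreeGroup.inv_mk, FreeGroup.mul_mk]
        rw [key, norm_mk_of_chain' hj, cpl_cons, if_neg hab]
        simp [FreeGroup.invRev_length]

/-- The Gromov form of the word length on the free group, on basis vectors. -/
noncomputable def gromovF (n : ℕ) (w₁ w₂ : FreeGroup (Fin n)) : ℝ :=
  ((FreeGroup.norm w₁ : ℝ) + (FreeGroup.norm w₂ : ℝ)
    - (FreeGroup.norm (w₁⁻¹ * w₂) : ℝ)) / 2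

/-- Bilinear extension of the Gromov form to ℝ[F_n]. -/
noncomputable def gromovFormF (n : ℕ) (a b : FreeGroup (Fin n) →₀ ℝ) : ℝ :=
  ∑ g ∈ a.support, ∑ h ∈ b.support, a g * b h * gromovF n g h

/-- w⁻: the reduced word of w with its last letter removed (last exponent
decreased by one in absolute value). -/
def predF (n : ℕ) (w : FreeGroup (Fin n)) : FreeGroup (Fin n) :=
  FreeGroup.mk (FreeGroup.toWord w).dropLast

/-- u_w = δ_w − δ_{w⁻} ∈ ℝ[F_n]. -/
noncomputable def uF (n : ℕ) (w : FreeGroup (Fin n)) : FreeGroup (Fin n) →₀ ℝ :=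
  Finsupp.single w 1 - Finsupp.single (predF n w) 1

lemma gromovF_eq_cpl (n : ℕ) (g h : FreeGroup (Fin n)) :
    gromovF n g h = (cpl g.toWord h.toWord : ℝ) := by
  have hN := norm_inv_mul_add g.toWord h.toWord (chain'_toWord g) (chain'_toWord h)
  rw [FreeGroup.mk_toWord, FreeGroup.mk_toWord] at hN
  have h1 : FreeGroup.norm g = g.toWord.length := rfl
  have h2 : FreeGroup.norm h = h.toWord.length := rfl
  unfold gromovF
  rw [h1, h2]
  have := congrArg (fun x : ℕ => (x : ℝ)) hN
  push_cast at this ⊢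
  linarith

lemma toWord_predF (n : ℕ) (w : FreeGroup (Fin n)) :
    (predF n w).toWord = w.toWord.dropLast := by
  have hc : List.Chain' RR w.toWord.dropLast :=
    (chain'_toWord w).prefix w.toWord.dropLast_prefix
  rw [predF, FreeGroup.toWord_mk, reduce_eq_self_of_chain' hc]

lemma predF_ne (n : ℕ) {w : FreeGroup (Fin n)} (hw : w ≠ 1) : predF n w ≠ w := by
  intro h
  have hlen : (predF n w).toWord.length = w.toWord.length := by rw [h]
  rw [toWord_predF, List.length_dropLast] at hlen
  have : w.toWord ≠ [] := fun hnil => hw (FreeGroup.toWord_eq_nil_iff.1 hnil)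
  have : 0 < w.toWord.length := List.length_pos_iff.2 this
  omega

lemma gromovFormF_eq_sum (n : ℕ) (a b : FreeGroup (Fin n) →₀ ℝ)
    (S T : Finset (FreeGroup (Fin n))) (hS : a.support ⊆ S) (hT : b.support ⊆ T) :
    gromovFormF n a b = ∑ g ∈ S, ∑ h ∈ T, a g * b h * gromovF n g h := by
  unfold gromovFormF
  rw [Finset.sum_subset hS]
  · refine Finset.sum_congr rfl fun g _ => ?_
    exact Finset.sum_subset hT fun h _ hh => by
      rw [Finsupp.notMem_support_iff.1 hh]; ring
  · intro g _ hg
    rw [Finsupp.notMem_support_iff.1 hg]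
    simp

lemma uF_support (n : ℕ) (w : FreeGroup (Fin n)) :
    (uF n w).support ⊆ {w, predF n w} := by
  refine (Finsupp.support_sub).trans ?_
  refine Finset.union_subset ?_ ?_
  · exact (Finsupp.support_single_subset).trans (by simp)
  · exact (Finsupp.support_single_subset).trans (by simp [Finset.insert_subset_iff])

lemma form_expand (n : ℕ) (w₁ w₂ : FreeGroup (Fin n)) (h1 : w₁ ≠ 1) (h2 : w₂ ≠ 1) :
    gromovFormF n (uF n w₁) (uF n w₂)
      = gromovF n w₁ w₂ - gromovF n w₁ (predF n w₂) - gromovF n (predF n w₁) w₂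
        + gromovF n (predF n w₁) (predF n w₂) := by
  have hp1 := predF_ne n h1
  have hp2 := predF_ne n h2
  rw [gromovFormF_eq_sum n _ _ _ _ (uF_support n w₁) (uF_support n w₂)]
  have e1 : ∀ w : FreeGroup (Fin n), w ≠ 1 → (uF n w) w = 1 := by
    intro w hw
    simp [uF, Finsupp.sub_apply, Finsupp.single_apply, (predF_ne n hw)]
  have e2 : ∀ w : FreeGroup (Fin n), w ≠ 1 → (uF n w) (predF n w) = -1 := by
    intro w hw
    simp [uF, Finsupp.sub_apply, Finsupp.single_apply, Ne.symm (predF_ne n hw)]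
  rw [Finset.sum_pair (Ne.symm hp1)]
  rw [Finset.sum_pair (Ne.symm hp2), Finset.sum_pair (Ne.symm hp2)]
  rw [e1 w₁ h1, e1 w₂ h2, e2 w₁ h1, e2 w₂ h2]
  ring

/-- the family {u_w : w ≠ e} is orthonormal for the Gromov form of
the word length on the free group F_n. -/
theorem uF_orthonormal (n : ℕ) :
    (∀ w : FreeGroup (Fin n), w ≠ 1 → gromovFormF n (uF n w) (uF n w) = 1) ∧
    (∀ w₁ w₂ : FreeGroup (Fin n), w₁ ≠ 1 → w₂ ≠ 1 → w₁ ≠ w₂ →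
      gromovFormF n (uF n w₁) (uF n w₂) = 0) := by
  have key : ∀ w₁ w₂ : FreeGroup (Fin n), w₁ ≠ 1 → w₂ ≠ 1 →
      gromovFormF n (uF n w₁) (uF n w₂)
        = ((cpl w₁.toWord w₂.toWord : ℝ)
          - (min (cpl w₁.toWord w₂.toWord) (w₂.toWord.length - 1) : ℕ)
          - (min (cpl w₁.toWord w₂.toWord) (w₁.toWord.length - 1) : ℕ)
          + (min (min (cpl w₁.toWord w₂.toWord) (w₁.toWord.length - 1))
              (w₂.toWord.length - 1) : ℕ)) := by
    intro w₁ w₂ h1 h2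
    rw [form_expand n w₁ w₂ h1 h2, gromovF_eq_cpl, gromovF_eq_cpl, gromovF_eq_cpl,
      gromovF_eq_cpl, toWord_predF, toWord_predF]
    have hB : cpl w₁.toWord w₂.toWord.dropLast
        = min (cpl w₁.toWord w₂.toWord) (w₂.toWord.length - 1) := by
      rw [cpl_prefix _ w₂.toWord.dropLast_prefix, List.length_dropLast]
    have hC : cpl w₁.toWord.dropLast w₂.toWord
        = min (cpl w₁.toWord w₂.toWord) (w₁.toWord.length - 1) := by
      rw [cpl_comm, cpl_prefix _ w₁.toWord.dropLast_prefix, List.length_dropLast,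
        cpl_comm]
    have hD : cpl w₁.toWord.dropLast w₂.toWord.dropLast
        = min (min (cpl w₁.toWord w₂.toWord) (w₁.toWord.length - 1))
            (w₂.toWord.length - 1) := by
      rw [cpl_prefix _ w₂.toWord.dropLast_prefix, List.length_dropLast, hC]
    rw [hB, hC, hD]
  constructor
  · intro w hw
    rw [key w w hw hw]
    have hm : 0 < w.toWord.length :=
      List.length_pos_iff.2 fun hnil => hw (FreeGroup.toWord_eq_nil_iff.1 hnil)
    rw [cpl_self]
    have e1 : min w.toWord.length (w.toWord.length - 1) = w.toWord.length - 1 := by omega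
    rw [e1, min_self]
    have : ((w.toWord.length - 1 : ℕ) : ℝ) = (w.toWord.length : ℝ) - 1 := by
      push_cast [hm]; ring
    rw [this]; ring
  · intro w₁ w₂ h1 h2 hne
    rw [key w₁ w₂ h1 h2]
    have hm1 : 0 < w₁.toWord.length :=
      List.length_pos_iff.2 fun hnil => h1 (FreeGroup.toWord_eq_nil_iff.1 hnil)
    have hm2 : 0 < w₂.toWord.length :=
      List.length_pos_iff.2 fun hnil => h2 (FreeGroup.toWord_eq_nil_iff.1 hnil)
    have hle1 := cpl_le_left w₁.toWord w₂.toWord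
    have hle2 := cpl_le_right w₁.toWord w₂.toWord
    have hlt : cpl w₁.toWord w₂.toWord < w₁.toWord.length
        ∨ cpl w₁.toWord w₂.toWord < w₂.toWord.length :=
      cpl_lt_of_ne fun hh => hne (FreeGroup.toWord_injective hh)
    set k := cpl w₁.toWord w₂.toWord
    set m1 := w₁.toWord.length
    set m2 := w₂.toWord.length
    have hnat : k + min (min k (m1 - 1)) (m2 - 1) = min k (m2 - 1) + min k (m1 - 1) := by
      omega
    have hcast : ((k + min (min k (m1 - 1)) (m2 - 1) : ℕ) : ℝ)
        = ((min k (m2 - 1) + min k (m1 - 1) : ℕ) : ℝ) := by exact congrArg (fun x : ℕ => (x : ℝ)) hnat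
    rw [Nat.cast_add, Nat.cast_add] at hcast
    linarith
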